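/- Fix c, β ∈ (0, π). Let I ⊆ (0, π) be an open interval and b, α, γ : I → (0, π) functions such that for every a ∈ I: cos(b(a)) = cos c · cos a + sin c · sin a · cos β, cos c = cos a · cos(b(a)) + sin a · sin(b(a)) · cos(γ(a)), and cos a = cos(b(a)) · cos c + sin(b(a)) · sin c · cos(α(a)). Then α is differentiable on I with α′(a) = sin(γ(a)) / sin(b(a)) for every a ∈ I. -/

import Mathlib

open Real Set

set_option maxHeartbeats 1000000 in
/-- Spherical trigonometry: with `c, β` fixed and `b`, `γ`, `α` determined by the
cosine laws as functions of the side `a`, one has `∂α/∂a = sin γ / sin b`. -/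
theorem stmt_7 (c β : ℝ) (hc : c ∈ Ioo 0 π) (hβ : β ∈ Ioo 0 π)
    (lo hi : ℝ) (hI : Ioo lo hi ⊆ Ioo 0 π)
    (b α γ : ℝ → ℝ)
    (hb : ∀ a ∈ Ioo lo hi, b a ∈ Ioo 0 π)
    (hα : ∀ a ∈ Ioo lo hi, α a ∈ Ioo 0 π)
    (hγ : ∀ a ∈ Ioo lo hi, γ a ∈ Ioo 0 π)
    (law1 : ∀ a ∈ Ioo lo hi, cos (b a) = cos c * cos a + sin c * sin a * cos β)
    (law2 : ∀ a ∈ Ioo lo hi, cos c = cos a * cos (b a) + sin a * sin (b a) * cos (γ a))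
    (law3 : ∀ a ∈ Ioo lo hi, cos a = cos (b a) * cos c + sin (b a) * sin c * cos (α a)) :
    ∀ a ∈ Ioo lo hi, HasDerivAt α (sin (γ a) / sin (b a)) a := by
  intro a ha
  have hS : Ioo lo hi ∈ nhds a := isOpen_Ioo.mem_nhds ha
  obtain ⟨ha0, haπ⟩ := hI ha
  obtain ⟨hb0, hbπ⟩ := hb a ha
  obtain ⟨hα0, hαπ⟩ := hα a ha
  obtain ⟨hγ0, hγπ⟩ := hγ a ha
  obtain ⟨hc0, hcπ⟩ := hc
  obtain ⟨hβ0, hβπ⟩ := hβ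
  have hsA : 0 < sin a := sin_pos_of_pos_of_lt_pi ha0 haπ
  have hsb : 0 < sin (b a) := sin_pos_of_pos_of_lt_pi hb0 hbπ
  have hsc : 0 < sin c := sin_pos_of_pos_of_lt_pi hc0 hcπ
  have hsβ : 0 < sin β := sin_pos_of_pos_of_lt_pi hβ0 hβπ
  have hsAL : 0 < sin (α a) := sin_pos_of_pos_of_lt_pi hα0 hαπ
  have hsG : 0 < sin (γ a) := sin_pos_of_pos_of_lt_pi hγ0 hγπ
  set F : ℝ → ℝ := fun x => cos c * cos x + sin c * sin x * cos β with hFdef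
  have hFx : ∀ x ∈ Ioo lo hi, F x = cos (b x) := fun x hx => (law1 x hx).symm
  have hFa : F a = cos (b a) := hFx a ha
  have hsqFx : ∀ x ∈ Ioo lo hi, Real.sqrt (1 - F x ^ 2) = sin (b x) := by
    intro x hx
    rw [hFx x hx]
    exact (sin_eq_sqrt_one_sub_cos_sq (hb x hx).1.le (hb x hx).2.le).symm
  have hsqF : Real.sqrt (1 - F a ^ 2) = sin (b a) := hsqFx a ha
  have h1F : (0:ℝ) < 1 - F a ^ 2 := by
    have := sin_sq_add_cos_sq (b a)
    rw [hFa]; nlinarith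
  set H : ℝ → ℝ := fun x => (cos x - F x * cos c) / (Real.sqrt (1 - F x ^ 2) * sin c)
    with hHdef
  have hHx : ∀ x ∈ Ioo lo hi, H x = cos (α x) := by
    intro x hx
    have hsbx : 0 < sin (b x) := sin_pos_of_pos_of_lt_pi (hb x hx).1 (hb x hx).2
    have l3 := law3 x hx
    rw [hHdef]
    simp only
    rw [hsqFx x hx, hFx x hx, div_eq_iff (by positivity)]
    linear_combination l3
  have hHa : H a = cos (α a) := hHx a ha
  -- derivative of F
  have hF' : HasDerivAt F (cos c * (-sin a) + sin c * cos a * cos β) a := by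
    exact ((Real.hasDerivAt_cos a).const_mul (cos c)).add
      (((Real.hasDerivAt_sin a).const_mul (sin c)).mul_const (cos β))
  set F' : ℝ := cos c * (-sin a) + sin c * cos a * cos β with hF'def
  -- derivative of x ↦ 1 - F x ^ 2
  have hinner : HasDerivAt (fun x => 1 - F x ^ 2) (-(2 * F a ^ 1 * F')) a := by
    simpa using (hF'.pow 2).const_sub 1
  have hsq' : HasDerivAt (fun x => Real.sqrt (1 - F x ^ 2))
      (1 / (2 * Real.sqrt (1 - F a ^ 2)) * -(2 * F a ^ 1 * F')) a :=
    (Real.hasDerivAt_sqrt (ne_of_gt h1F)).comp a hinner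
  -- derivative of H
  have hnum : HasDerivAt (fun x => cos x - F x * cos c) (-sin a - F' * cos c) a :=
    (Real.hasDerivAt_cos a).sub (hF'.mul_const (cos c))
  have hden : HasDerivAt (fun x => Real.sqrt (1 - F x ^ 2) * sin c)
      (1 / (2 * Real.sqrt (1 - F a ^ 2)) * -(2 * F a ^ 1 * F') * sin c) a :=
    hsq'.mul_const (sin c)
  have hdenne : Real.sqrt (1 - F a ^ 2) * sin c ≠ 0 := by
    rw [hsqF]; positivity
  have hH' : HasDerivAt H
      (((-sin a - F' * cos c) * (Real.sqrt (1 - F a ^ 2) * sin c) -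
        (cos a - F a * cos c) *
          (1 / (2 * Real.sqrt (1 - F a ^ 2)) * -(2 * F a ^ 1 * F') * sin c)) /
        (Real.sqrt (1 - F a ^ 2) * sin c) ^ 2) a :=
    hnum.div hden hdenne
  -- arccos composition
  have hcAL2 : cos (α a) ^ 2 < 1 := by
    have := sin_sq_add_cos_sq (α a); nlinarith
  have hne1 : H a ≠ -1 := by rw [hHa]; intro h; rw [h] at hcAL2; norm_num at hcAL2
  have hne2 : H a ≠ 1 := by rw [hHa]; intro h; rw [h] at hcAL2; norm_num at hcAL2
  have hAder := (Real.hasDerivAt_arccos hne1 hne2).comp a hH'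
  have hev : α =ᶠ[nhds a] fun x => arccos (H x) := by
    filter_upwards [hS] with x hx
    rw [hHx x hx, arccos_cos (hα x hx).1.le (hα x hx).2.le]
  have hαder := hAder.congr_of_eventuallyEq hev
  refine hαder.congr_deriv ?_; symm
  -- value equality
  have hsqH : Real.sqrt (1 - H a ^ 2) = sin (α a) := by
    rw [hHa]
    exact (sin_eq_sqrt_one_sub_cos_sq hα0.le hαπ.le).symm
  rw [hsqH, hsqF, hFa]
  -- key algebraic identities
  have e1 := law1 a ha
  have pA := sin_sq_add_cos_sq a
  have pb := sin_sq_add_cos_sq (b a)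
  have pc := sin_sq_add_cos_sq c
  have pβ := sin_sq_add_cos_sq β
  have pα := sin_sq_add_cos_sq (α a)
  have pγ := sin_sq_add_cos_sq (γ a)
  have e3 : sin (b a) * cos (α a) = cos a * sin c - sin a * cos c * cos β := by
    have l3 := law3 a ha
    have h : sin c * (sin (b a) * cos (α a)) =
        sin c * (cos a * sin c - sin a * cos c * cos β) := by
      linear_combination (-1 : ℝ) * l3 + (-cos c) * e1 + (-cos a) * pc
    exact mul_left_cancel₀ (ne_of_gt hsc) h
  have e4 : sin (b a) * sin (α a) = sin a * sin β := by
    have hsq : (sin (b a) * sin (α a)) ^ 2 = (sin a * sin β) ^ 2 := by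
      linear_combination (sin (b a))^2 * pα -
        (sin (b a) * cos (α a) + (cos a * sin c - sin a * cos c * cos β)) * e3 + pb -
        (cos (b a) + (cos c * cos a + sin c * sin a * cos β)) * e1 +
        (-(cos c ^ 2 + sin c ^ 2)) * pA +
        (-1 + sin a ^ 2 - sin a ^ 2 * cos β ^ 2) * pc + (-(sin a ^ 2)) * pβ
    have h1 : (0:ℝ) ≤ sin (b a) * sin (α a) := by positivity
    have h2 : (0:ℝ) ≤ sin a * sin β := by positivity
    calc sin (b a) * sin (α a) = Real.sqrt ((sin (b a) * sin (α a)) ^ 2) := by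
            rw [Real.sqrt_sq h1]
      _ = Real.sqrt ((sin a * sin β) ^ 2) := by rw [hsq]
      _ = sin a * sin β := Real.sqrt_sq h2
  have e5c : sin a * (sin (b a) * cos (γ a)) = cos c - cos a * cos (b a) := by
    linear_combination (-1 : ℝ) * law2 a ha
  have e5 : sin (b a) * sin (γ a) = sin c * sin β := by
    have hsq : (sin a * (sin (b a) * sin (γ a))) ^ 2 = (sin a * (sin c * sin β)) ^ 2 := by
      linear_combination (sin a)^2 * (sin (b a))^2 * pγ -
        (sin a * (sin (b a) * cos (γ a)) + (cos c - cos a * cos (b a))) * e5c +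
        (sin a)^2 * pb +
        ((-(sin a ^ 2) - cos a ^ 2) * (cos (b a) + (cos c * cos a + sin c * sin a * cos β))
          + 2 * cos a * cos c) * e1 +
        (-1 + 2 * cos c ^ 2 + sin c ^ 2 - cos a ^ 2 * cos c ^ 2
          - 2 * sin a * cos a * sin c * cos c * cos β + sin a ^ 2 - sin a ^ 2 * cos c ^ 2
          - sin a ^ 2 * sin c ^ 2 - sin a ^ 2 * sin c ^ 2 * cos β ^ 2) * pA +
        (1 - cos a ^ 2 - 3 * sin a ^ 2 + sin a ^ 2 * cos a ^ 2 + sin a ^ 4) * pc +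
        (-(sin a ^ 2) * sin c ^ 2) * pβ
    have h1 : (0:ℝ) ≤ sin a * (sin (b a) * sin (γ a)) := by positivity
    have h2 : (0:ℝ) ≤ sin a * (sin c * sin β) := by positivity
    have key : sin a * (sin (b a) * sin (γ a)) = sin a * (sin c * sin β) := by
      calc sin a * (sin (b a) * sin (γ a))
          = Real.sqrt ((sin a * (sin (b a) * sin (γ a))) ^ 2) := by rw [Real.sqrt_sq h1]
        _ = Real.sqrt ((sin a * (sin c * sin β)) ^ 2) := by rw [hsq]
        _ = sin a * (sin c * sin β) := Real.sqrt_sq h2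
    exact mul_left_cancel₀ (ne_of_gt hsA) key
  have e45 : (sin (b a) * sin (α a)) * (sin (b a) * sin (γ a)) =
      (sin a * sin β) * (sin c * sin β) := by rw [e4, e5]
  rw [hF'def]
  field_simp
  linear_combination (sin c) * e45 +
    (-1) *
      ((sin a + (-(cos c * sin a) + sin c * cos a * cos β) * cos c) * pb +
        (-(sin a) * (cos (b a) + (cos c * cos a + sin c * sin a * cos β)) -
          cos a * (-(cos c * sin a) + sin c * cos a * cos β)) * e1 +
        (-(cos a * sin c * cos c * cos β) - sin a * sin c ^ 2 * cos β ^ 2) * pA +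
        (-(sin a)) * pc + (-(sin a * sin c ^ 2)) * pβ)
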